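/- In the setting of a Lie algebra g with A₄-action and coordinate algebra (A,*), the components δ_i satisfy δ₀(x, y*z) + δ₂(y, z*x) + δ₁(z, x*y) = 0 for all x,y,z ∈ A (i.e., δ₀(x,y*z) + δ₋₁(y,z*x) + δ₋₂(z,x*y) = 0 with indices mod 3). -/

import Mathlib

/-- The embedding `ιᵢ = φ^i ∘ ι₀` of the coordinate space `A = g₀` into `g`. -/
def iota {F : Type*} [Field F] {g : Type*} [LieRing g] [LieAlgebra F g]
    (φ : g →ₗ⁅F⁆ g) (A : Submodule F g) (i : ZMod 3) (x : A) : g :=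
  (fun z => φ z)^[i.val] (x : g)

/-- In a Lie algebra with `A₄`-action and coordinate algebra `(A,*)`,
`δ₀(x,y*z) + δ₂(y,z*x) + δ₁(z,x*y) = 0` as operators on `A`. -/
theorem stmt8
    (F : Type*) [Field F] (hchar : (2 : F) ≠ 0)
    (g : Type*) [LieRing g] [LieAlgebra F g]
    (τ₁ τ₂ φ : g →ₗ⁅F⁆ g)
    (hτ₁ : ∀ x, τ₁ (τ₁ x) = x) (hτ₂ : ∀ x, τ₂ (τ₂ x) = x)
    (hcomm : ∀ x, τ₁ (τ₂ x) = τ₂ (τ₁ x))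
    (hφ3 : ∀ x, φ (φ (φ x)) = x)
    (hrel1 : ∀ x, φ (τ₁ x) = τ₂ (φ x))
    (hrel2 : ∀ x, φ (τ₂ x) = τ₁ (τ₂ (φ x)))
    (A : Submodule F g)
    (hA : A = Module.End.eigenspace (τ₁ : g →ₗ[F] g) 1 ⊓
              Module.End.eigenspace (τ₂ : g →ₗ[F] g) (-1))
    (δ : ZMod 3 → A → A → A → A)
    (hδ : ∀ (i : ZMod 3) (x y z : A),
      ⁅⁅iota φ A 0 x, iota φ A 0 y⁆, iota φ A i z⁆ = iota φ A i (δ i x y z))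
    (mul : A →ₗ[F] A →ₗ[F] A)
    (hmul : ∀ (i : ZMod 3) (x y : A),
      ⁅iota φ A i x, iota φ A (i + 1) y⁆ = iota φ A (i + 2) (mul x y))
    :
    ∀ x y z w : A,
      δ 0 x (mul y z) w + δ 2 y (mul z x) w + δ 1 z (mul x y) w = 0 := by
  intro x y z w
  -- injectivity of φ
  have hφinj : Function.Injective (φ : g → g) := by
    intro u v h
    calc u = φ (φ (φ u)) := (hφ3 u).symm
    _ = φ (φ (φ v)) := by rw [h]
    _ = v := hφ3 v
  -- basic equations, with iota unfolded definitionally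
  have hm0 : ∀ a b : A, ⁅(a : g), φ b⁆ = φ (φ ((mul a b : A) : g)) := fun a b => hmul 0 a b
  have hm1 : ∀ a b : A, ⁅φ (a : g), φ (φ (b : g))⁆ = ((mul a b : A) : g) := fun a b => hmul 1 a b
  have hm2 : ∀ a b : A, ⁅φ (φ (a : g)), (b : g)⁆ = φ ((mul a b : A) : g) := fun a b => hmul 2 a b
  have hd0 : ∀ a b c : A, ⁅⁅(a : g), (b : g)⁆, (c : g)⁆ = ((δ 0 a b c : A) : g) :=
    fun a b c => hδ 0 a b c
  have hd1 : ∀ a b c : A, ⁅⁅(a : g), (b : g)⁆, φ (c : g)⁆ = φ ((δ 1 a b c : A) : g) :=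
    fun a b c => hδ 1 a b c
  have hd2 : ∀ a b c : A, ⁅⁅(a : g), (b : g)⁆, φ (φ (c : g))⁆ = φ (φ ((δ 2 a b c : A) : g)) :=
    fun a b c => hδ 2 a b c
  -- antisymmetry of δ 1 in the first two arguments
  have hanti : ∀ a b c : A, ((δ 1 a b c : A) : g) + ((δ 1 b a c : A) : g) = 0 := by
    intro a b c
    apply hφinj
    rw [map_add φ, map_zero φ, ← hd1, ← hd1, ← add_lie]
    have : ⁅(a : g), (b : g)⁆ + ⁅(b : g), (a : g)⁆ = 0 := by
      rw [← lie_skew (a : g) (b : g)]; abel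
    rw [this, zero_lie]
  -- the main computation
  have key : ((δ 0 x (mul y z) w : A) : g)
      = ((δ 1 (mul x y) z w : A) : g) - ((δ 2 y (mul z x) w : A) : g) := by
    have e1 : ⁅(x : g), ((mul y z : A) : g)⁆
        = ⁅φ (φ ((mul x y : A) : g)), φ (φ (z : g))⁆ - ⁅φ (y : g), φ ((mul z x : A) : g)⁆ := by
      have e : ⁅(x : g), φ (φ (z : g))⁆ = -φ ((mul z x : A) : g) := by
        rw [← hm2 z x, ← lie_skew]
      rw [← hm1 y z, leibniz_lie, hm0 x y, e, lie_neg, sub_eq_add_neg]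
    calc ((δ 0 x (mul y z) w : A) : g)
        = ⁅⁅(x : g), ((mul y z : A) : g)⁆, (w : g)⁆ := (hd0 x (mul y z) w).symm
      _ = ⁅⁅φ (φ ((mul x y : A) : g)), φ (φ (z : g))⁆, (w : g)⁆
          - ⁅⁅φ (y : g), φ ((mul z x : A) : g)⁆, (w : g)⁆ := by rw [e1, sub_lie]
      _ = ⁅φ (φ ⁅((mul x y : A) : g), (z : g)⁆), φ (φ (φ (w : g)))⁆
          - ⁅φ ⁅(y : g), ((mul z x : A) : g)⁆, φ (φ (φ (w : g)))⁆ := by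
            rw [hφ3 (w : g), ← LieHom.map_lie φ, ← LieHom.map_lie φ, ← LieHom.map_lie φ]
      _ = φ (φ (φ ((δ 1 (mul x y) z w : A) : g))) - φ (φ (φ ((δ 2 y (mul z x) w : A) : g))) := by
            rw [← LieHom.map_lie φ, ← LieHom.map_lie φ, ← LieHom.map_lie φ,
              hd1 (mul x y) z w, hd2 y (mul z x) w]
      _ = ((δ 1 (mul x y) z w : A) : g) - ((δ 2 y (mul z x) w : A) : g) := by
            rw [hφ3, hφ3]
  apply Subtype.ext
  push_cast
  rw [key]
  have h := hanti (mul x y) z w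
  linear_combination (norm := abel) h
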